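/- Fix d ≥ 2 and p = (p₁,…,p_d) ∈ (0,1)^d. Let I be any {0,1}^d-valued random vector with P(I_m = 1) = p_m for each m, and let I^c be the comonotonic Bernoulli vector with the same margins, i.e. I^c_m = 1{V > 1 - p_m} for a single random variable V uniform on [0,1]. Construct U from I and U^{EPD-GFGM} from I^c via the GFGM representation U_m = U₀,ₘ^{1-p_m}·U₁,ₘ^{I_m} (respectively with I^c), where U₀, U₁ are vectors of i.i.d. standard uniform random variables on [0,1] independent of the Bernoulli vector. Then E[φ(U)] ≤ E[φ(U^{EPD-GFGM})] for every bounded measurable supermodular function φ: ℝ^d → ℝ. -/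

import Mathlib

open MeasureTheory ProbabilityTheory Set

/-- The real value (`0` or `1`) of a Bernoulli outcome. -/
noncomputable def bval (b : Bool) : ℝ := if b then 1 else 0

namespace GfgmAux

variable {d : ℕ}

lemma bsup (a b : Bool) : a ⊔ b = (a || b) := rfl
lemma binf (a b : Bool) : a ⊓ b = (a && b) := rfl

def chainv (σ : Equiv.Perm (Fin d)) (k : ℕ) : Fin d → Bool :=
  fun m => decide ((σ.symm m : ℕ) < k)

def partv (σ : Equiv.Perm (Fin d)) (b : Fin d → Bool) (k : ℕ) : Fin d → Bool :=
  fun m => b m && decide ((σ.symm m : ℕ) < k)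

lemma partv_zero (σ : Equiv.Perm (Fin d)) (b : Fin d → Bool) :
    partv σ b 0 = fun _ => false := by
  funext m; simp [partv]

lemma partv_d (σ : Equiv.Perm (Fin d)) (b : Fin d → Bool) :
    partv σ b d = b := by
  funext m; simp [partv, (σ.symm m).isLt]

lemma partv_eq_of_sym (σ : Equiv.Perm (Fin d)) (b : Fin d → Bool) (m : Fin d) (n : ℕ)
    (hn : n < d) (h : (σ.symm m : ℕ) = n) : m = σ ⟨n, hn⟩ := by
  have : σ.symm m = ⟨n, hn⟩ := Fin.ext h
  simpa using congrArg σ this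

lemma step_le (σ : Equiv.Perm (Fin d)) (b : Fin d → Bool)
    (Ψ : (Fin d → Bool) → ℝ)
    (hsm : ∀ x y, Ψ x + Ψ y ≤ Ψ (x ⊔ y) + Ψ (x ⊓ y))
    (n : ℕ) (hn : n < d) :
    Ψ (partv σ b (n + 1)) ≤ Ψ (partv σ b n)
      + bval (b (σ ⟨n, hn⟩)) * (Ψ (chainv σ (n + 1)) - Ψ (chainv σ n)) := by
  by_cases hb : b (σ ⟨n, hn⟩) = true
  · have hx : partv σ b (n+1) ⊔ chainv σ n = chainv σ (n+1) := by
      funext m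
      simp only [Pi.sup_apply, partv, chainv, bsup]
      rcases lt_trichotomy ((σ.symm m : ℕ)) n with h | h | h
      · simp [h, Nat.lt_succ_of_lt h]
      · rw [partv_eq_of_sym σ b m n hn h] at *
        simp [hb, h]
      · have h1 : ¬ ((σ.symm m : ℕ) < n) := by omega
        have h2 : ¬ ((σ.symm m : ℕ) < n + 1) := by omega
        simp [h1, h2]
    have hy : partv σ b (n+1) ⊓ chainv σ n = partv σ b n := by
      funext m
      simp only [Pi.inf_apply, partv, chainv, binf]
      rcases lt_trichotomy ((σ.symm m : ℕ)) n with h | h | h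
      · simp [h, Nat.lt_succ_of_lt h]
      · simp [h]
      · have h1 : ¬ ((σ.symm m : ℕ) < n) := by omega
        have h2 : ¬ ((σ.symm m : ℕ) < n + 1) := by omega
        simp [h1, h2]
    have h3 := hsm (partv σ b (n+1)) (chainv σ n)
    rw [hx, hy] at h3
    simp only [hb, bval, if_true, one_mul]
    linarith
  · have hbb : b (σ ⟨n, hn⟩) = false := by simpa using hb
    have he : partv σ b (n+1) = partv σ b n := by
      funext m
      simp only [partv]
      rcases lt_trichotomy ((σ.symm m : ℕ)) n with h | h | h
      · simp [h, Nat.lt_succ_of_lt h]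
      · rw [partv_eq_of_sym σ b m n hn h, hbb]; simp
      · have h1 : ¬ ((σ.symm m : ℕ) < n) := by omega
        have h2 : ¬ ((σ.symm m : ℕ) < n + 1) := by omega
        simp [h1, h2]
    rw [he, hbb]
    simp [bval]

lemma step_eq (σ : Equiv.Perm (Fin d)) (b : Fin d → Bool)
    (hchain : ∀ j k : Fin d, j ≤ k → b (σ k) = true → b (σ j) = true)
    (Ψ : (Fin d → Bool) → ℝ) (n : ℕ) (hn : n < d) :
    Ψ (partv σ b (n + 1)) = Ψ (partv σ b n)
      + bval (b (σ ⟨n, hn⟩)) * (Ψ (chainv σ (n + 1)) - Ψ (chainv σ n)) := by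
  by_cases hb : b (σ ⟨n, hn⟩) = true
  · have hful : ∀ m : Fin d, (σ.symm m : ℕ) ≤ n → b m = true := by
      intro m hm
      have : b (σ (σ.symm m)) = true :=
        hchain (σ.symm m) ⟨n, hn⟩ (by exact hm) hb
      simpa using this
    have h1 : partv σ b (n+1) = chainv σ (n+1) := by
      funext m
      simp only [partv, chainv]
      by_cases h : (σ.symm m : ℕ) < n + 1
      · simp [h, hful m (by omega)]
      · simp [h]
    have h2 : partv σ b n = chainv σ n := by
      funext m
      simp only [partv, chainv]
      by_cases h : (σ.symm m : ℕ) < n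
      · simp [h, hful m (by omega)]
      · simp [h]
    rw [h1, h2, hb]
    simp [bval]
  · have hbb : b (σ ⟨n, hn⟩) = false := by simpa using hb
    have he : partv σ b (n+1) = partv σ b n := by
      funext m
      simp only [partv]
      rcases lt_trichotomy ((σ.symm m : ℕ)) n with h | h | h
      · simp [h, Nat.lt_succ_of_lt h]
      · rw [partv_eq_of_sym σ b m n hn h, hbb]; simp
      · have h1 : ¬ ((σ.symm m : ℕ) < n) := by omega
        have h2 : ¬ ((σ.symm m : ℕ) < n + 1) := by omega
        simp [h1, h2]
    rw [he, hbb]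
    simp [bval]

end GfgmAux

namespace GfgmAux
variable {d : ℕ}

noncomputable def dstep (σ : Equiv.Perm (Fin d)) (b : Fin d → Bool)
    (Ψ : (Fin d → Bool) → ℝ) (n : ℕ) : ℝ :=
  if h : n < d then bval (b (σ ⟨n, h⟩)) * (Ψ (chainv σ (n+1)) - Ψ (chainv σ n)) else 0

lemma sum_dstep (σ : Equiv.Perm (Fin d)) (b : Fin d → Bool) (Ψ : (Fin d → Bool) → ℝ) :
    ∑ k ∈ Finset.range d, dstep σ b Ψ k
      = ∑ k : Fin d, bval (b (σ k)) * (Ψ (chainv σ (k+1)) - Ψ (chainv σ k)) := by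
  rw [← Fin.sum_univ_eq_sum_range]
  refine Finset.sum_congr rfl fun k _ => ?_
  simp [dstep, k.isLt]

lemma tele_le (σ : Equiv.Perm (Fin d)) (b : Fin d → Bool)
    (Ψ : (Fin d → Bool) → ℝ)
    (hsm : ∀ x y, Ψ x + Ψ y ≤ Ψ (x ⊔ y) + Ψ (x ⊓ y)) :
    Ψ b ≤ Ψ (fun _ => false)
      + ∑ k : Fin d, bval (b (σ k)) * (Ψ (chainv σ (k+1)) - Ψ (chainv σ k)) := by
  have main : ∀ n, n ≤ d →
      Ψ (partv σ b n) ≤ Ψ (fun _ => false) + ∑ k ∈ Finset.range n, dstep σ b Ψ k := by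
    intro n
    induction n with
    | zero => intro _; simp [partv_zero]
    | succ n ih =>
      intro hn
      have hnd : n < d := hn
      have h1 := step_le σ b Ψ hsm n hnd
      have h2 := ih (le_of_lt hnd)
      rw [Finset.sum_range_succ]
      have : dstep σ b Ψ n
          = bval (b (σ ⟨n, hnd⟩)) * (Ψ (chainv σ (n+1)) - Ψ (chainv σ n)) := by
        simp [dstep, hnd]
      rw [this]
      linarith
  have := main d le_rfl
  rw [partv_d, sum_dstep] at this
  exact this

lemma tele_eq (σ : Equiv.Perm (Fin d)) (b : Fin d → Bool)
    (hchain : ∀ j k : Fin d, j ≤ k → b (σ k) = true → b (σ j) = true)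
    (Ψ : (Fin d → Bool) → ℝ) :
    Ψ b = Ψ (fun _ => false)
      + ∑ k : Fin d, bval (b (σ k)) * (Ψ (chainv σ (k+1)) - Ψ (chainv σ k)) := by
  have main : ∀ n, n ≤ d →
      Ψ (partv σ b n) = Ψ (fun _ => false) + ∑ k ∈ Finset.range n, dstep σ b Ψ k := by
    intro n
    induction n with
    | zero => intro _; simp [partv_zero]
    | succ n ih =>
      intro hn
      have hnd : n < d := hn
      have h1 := step_eq σ b hchain Ψ n hnd
      have h2 := ih (le_of_lt hnd)
      rw [Finset.sum_range_succ]
      have : dstep σ b Ψ n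
          = bval (b (σ ⟨n, hnd⟩)) * (Ψ (chainv σ (n+1)) - Ψ (chainv σ n)) := by
        simp [dstep, hnd]
      rw [this]
      linarith
  have := main d le_rfl
  rw [partv_d, sum_dstep] at this
  exact this

end GfgmAux

namespace GfgmAux
variable {d : ℕ}

lemma mu01_prob : IsProbabilityMeasure (volume.restrict (Icc (0:ℝ) 1)) :=
  ⟨by simp [Real.volume_Icc]⟩

lemma measurableSet_coord (m : Fin d) : MeasurableSet {b : Fin d → Bool | b m = true} := by
  have : {b : Fin d → Bool | b m = true} = (fun b : Fin d → Bool => b m) ⁻¹' {true} := rfl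
  rw [this]
  exact (measurable_pi_apply m) (by trivial : MeasurableSet {true})

lemma integral_bval (ν : Measure (Fin d → Bool)) [IsProbabilityMeasure ν]
    (m : Fin d) (q : ℝ) (hq : 0 ≤ q)
    (hmarg : ν {b | b m = true} = ENNReal.ofReal q) :
    ∫ b, bval (b m) ∂ν = q := by
  have h1 : ∀ b : Fin d → Bool,
      bval (b m) = Set.indicator {b : Fin d → Bool | b m = true} (fun _ => (1:ℝ)) b := by
    intro b; by_cases h : b m = true <;> simp [bval, h, Set.indicator_apply]
  rw [show (fun b : Fin d → Bool => bval (b m)) = _ from funext h1]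
  rw [integral_indicator (measurableSet_coord m), setIntegral_const, measureReal_def, hmarg]
  simp [ENNReal.toReal_ofReal hq]

lemma integral_le (p : Fin d → ℝ) (hp : ∀ m, 0 ≤ p m) (σ : Equiv.Perm (Fin d))
    (ν : Measure (Fin d → Bool)) [IsProbabilityMeasure ν]
    (hmarg : ∀ m, ν {b | b m = true} = ENNReal.ofReal (p m))
    (Ψ : (Fin d → Bool) → ℝ)
    (hsm : ∀ x y, Ψ x + Ψ y ≤ Ψ (x ⊔ y) + Ψ (x ⊓ y)) :
    ∫ b, Ψ b ∂ν ≤ Ψ (fun _ => false)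
      + ∑ k : Fin d, p (σ k) * (Ψ (chainv σ (k+1)) - Ψ (chainv σ k)) := by
  have key : ∫ b, Ψ b ∂ν ≤ ∫ b, (Ψ (fun _ => false)
      + ∑ k : Fin d, bval (b (σ k)) * (Ψ (chainv σ (k+1)) - Ψ (chainv σ k))) ∂ν :=
    integral_mono (Integrable.of_finite) (Integrable.of_finite) (fun b => tele_le σ b Ψ hsm)
  refine key.trans_eq ?_
  rw [integral_add (integrable_const _) Integrable.of_finite, integral_const]
  simp only [measureReal_def, measure_univ, ENNReal.toReal_one, one_smul]
  congr 1
  rw [integral_finset_sum _ (fun k _ => Integrable.of_finite)]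
  refine Finset.sum_congr rfl fun k _ => ?_
  rw [integral_mul_const, integral_bval ν (σ k) (p (σ k)) (hp _) (hmarg _)]

lemma integral_comono (p : Fin d → ℝ) (hp : ∀ m, p m ∈ Ioo (0:ℝ) 1)
    (σ : Equiv.Perm (Fin d)) (hσ : ∀ j k : Fin d, j ≤ k → p (σ k) ≤ p (σ j))
    (Ψ : (Fin d → Bool) → ℝ) :
    ∫ v, Ψ (fun m => decide (1 - p m < v)) ∂(volume.restrict (Icc (0:ℝ) 1))
      = Ψ (fun _ => false)
        + ∑ k : Fin d, p (σ k) * (Ψ (chainv σ (k+1)) - Ψ (chainv σ k)) := by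
  have hind : ∀ a v : ℝ, bval (decide (a < v)) = (Ioi a).indicator (fun _ => (1:ℝ)) v := by
    intro a v; by_cases h : a < v <;> simp [bval, h, Set.indicator_apply]
  have hpt : ∀ v : ℝ, Ψ (fun m => decide (1 - p m < v)) = Ψ (fun _ => false)
      + ∑ k : Fin d, (Ioi (1 - p (σ k))).indicator (fun _ => (1:ℝ)) v
          * (Ψ (chainv σ (k+1)) - Ψ (chainv σ k)) := by
    intro v
    have hchain : ∀ j k : Fin d, j ≤ k →
        (fun m => decide (1 - p m < v)) (σ k) = true →
        (fun m => decide (1 - p m < v)) (σ j) = true := by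
      intro j k hjk h
      simp only [decide_eq_true_eq] at h ⊢
      have := hσ j k hjk
      linarith
    have := tele_eq σ (fun m => decide (1 - p m < v)) hchain Ψ
    rw [this]
    congr 1
    exact Finset.sum_congr rfl fun k _ => by rw [hind]
  rw [show (fun v => Ψ (fun m => decide (1 - p m < v))) = _ from funext hpt]
  haveI : IsProbabilityMeasure (volume.restrict (Icc (0:ℝ) 1)) := mu01_prob
  have hint : ∀ k : Fin d, Integrable (fun v =>
      (Ioi (1 - p (σ k))).indicator (fun _ => (1:ℝ)) v
        * (Ψ (chainv σ (k+1)) - Ψ (chainv σ k))) (volume.restrict (Icc (0:ℝ) 1)) :=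
    fun k => ((integrable_const (1:ℝ)).indicator measurableSet_Ioi).mul_const _
  rw [integral_add (integrable_const _) (integrable_finset_sum _ fun k _ => hint k),
    integral_const]
  simp only [measureReal_def, measure_univ, ENNReal.toReal_one, one_smul]
  congr 1
  rw [integral_finset_sum _ (fun k _ => hint k)]
  refine Finset.sum_congr rfl fun k _ => ?_
  rw [integral_mul_const, integral_indicator measurableSet_Ioi, setIntegral_const, measureReal_def]
  have hset : Ioi (1 - p (σ k)) ∩ Icc (0:ℝ) 1 = Ioc (1 - p (σ k)) 1 := by
    ext x
    constructor
    · rintro ⟨h1, _, h3⟩; exact ⟨h1, h3⟩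
    · rintro ⟨h1, h2⟩
      have := (hp (σ k)).2
      exact ⟨h1, by linarith, h2⟩
  rw [Measure.restrict_apply measurableSet_Ioi, hset, Real.volume_Ioc]
  have := (hp (σ k)).1
  rw [show (1:ℝ) - (1 - p (σ k)) = p (σ k) by ring]
  simp [ENNReal.toReal_ofReal (le_of_lt this)]

end GfgmAux

namespace GfgmAux

lemma map_pi_of_iIndep {ι : Type*} [Fintype ι] {Ω : Type*} [MeasurableSpace Ω]
    (P : Measure Ω) [IsProbabilityMeasure P] (f : ι → Ω → ℝ)
    (hf : ∀ i, Measurable (f i))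
    (h : iIndepFun f P)
    (μs : ι → Measure ℝ) [∀ i, IsProbabilityMeasure (μs i)]
    (hμ : ∀ i, P.map (f i) = μs i) :
    P.map (fun ω i => f i ω) = Measure.pi μs := by
  refine (Measure.pi_eq fun s hs => ?_).symm
  rw [Measure.map_apply (measurable_pi_lambda _ hf) (MeasurableSet.univ_pi hs)]
  have hpre : (fun ω i => f i ω) ⁻¹' (Set.pi univ s) = ⋂ i ∈ Finset.univ, f i ⁻¹' s i := by
    ext ω; simp [Set.mem_pi]
  rw [hpre, h.measure_inter_preimage_eq_mul Finset.univ (fun i _ => hs i)]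
  exact Finset.prod_congr rfl fun i _ => by rw [← hμ i, Measure.map_apply (hf i) (hs i)]

lemma bval_decide (c : Prop) [Decidable c] : bval (decide c) = if c then (1:ℝ) else 0 := by
  by_cases h : c <;> simp [bval, h]

lemma bool_pow {A t : ℝ} (hA : 0 ≤ A) (ht1 : t ≤ 1) (a b : Bool) :
    (A * t ^ bval a) ⊔ (A * t ^ bval b) = A * t ^ bval (a ⊓ b) ∧
    (A * t ^ bval a) ⊓ (A * t ^ bval b) = A * t ^ bval (a ⊔ b) := by
  have h1 : A * t ^ bval true = A * t := by rw [bval]; simp [Real.rpow_one]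
  have h0 : A * t ^ bval false = A * 1 := by rw [bval]; simp [Real.rpow_zero]
  have hle : A * t ≤ A * 1 := mul_le_mul_of_nonneg_left ht1 hA
  cases a <;> cases b
  · exact ⟨by rw [binf]; simp, by rw [bsup]; simp⟩
  · refine ⟨?_, ?_⟩
    · rw [binf]; simp only [Bool.false_and, h0, h1]; exact sup_eq_left.mpr hle
    · rw [bsup]; simp only [Bool.false_or, h0, h1]; exact inf_eq_right.mpr hle
  · refine ⟨?_, ?_⟩
    · rw [binf]; simp only [Bool.and_false, h0, h1]; exact sup_eq_right.mpr hle
    · rw [bsup]; simp only [Bool.or_false, h0, h1]; exact inf_eq_left.mpr hle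
  · exact ⟨by rw [binf]; simp, by rw [bsup]; simp⟩

end GfgmAux


open GfgmAux in
/-- For any `{0,1}^d`-valued `I` with margins `p`, the GFGM vector built from `I` is
dominated, in the supermodular order, by the GFGM vector built from the comonotonic
Bernoulli vector `I^c` with the same margins, `I^c_m = 1{V > 1 - p_m}` for a single
uniform `V`.  The latter gives the extreme positive dependence (EPD) GFGM copula. -/
theorem gfgm_epd_supermodular_max
    {Ω : Type*} [MeasurableSpace Ω] (P : Measure Ω) [IsProbabilityMeasure P]
    {Ω' : Type*} [MeasurableSpace Ω'] (P' : Measure Ω') [IsProbabilityMeasure P']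
    (d : ℕ) (hd : 2 ≤ d) (p : Fin d → ℝ) (hp : ∀ m, p m ∈ Ioo (0 : ℝ) 1)
    (I : Ω → Fin d → Bool) (U₀ U₁ : Fin d → Ω → ℝ)
    (V : Ω' → ℝ) (U₀' U₁' : Fin d → Ω' → ℝ)
    (hI : Measurable I) (hU₀ : ∀ m, Measurable (U₀ m)) (hU₁ : ∀ m, Measurable (U₁ m))
    (hV : Measurable V) (hU₀' : ∀ m, Measurable (U₀' m)) (hU₁' : ∀ m, Measurable (U₁' m))
    (hU₀law : ∀ m, P.map (U₀ m) = volume.restrict (Icc (0 : ℝ) 1))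
    (hU₁law : ∀ m, P.map (U₁ m) = volume.restrict (Icc (0 : ℝ) 1))
    (hVlaw : P'.map V = volume.restrict (Icc (0 : ℝ) 1))
    (hU₀law' : ∀ m, P'.map (U₀' m) = volume.restrict (Icc (0 : ℝ) 1))
    (hU₁law' : ∀ m, P'.map (U₁' m) = volume.restrict (Icc (0 : ℝ) 1))
    (hImarg : ∀ m, P {ω | I ω m = true} = ENNReal.ofReal (p m))
    (hiid : iIndepFun
      (Sum.elim U₀ U₁) P)
    (hIU : IndepFun I (fun ω j => Sum.elim U₀ U₁ j ω) P)
    (hiid' : iIndepFun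
      (Sum.elim (fun _ : Unit => V) (Sum.elim U₀' U₁')) P') :
    ∀ φ : (Fin d → ℝ) → ℝ, Measurable φ → (∃ c : ℝ, ∀ x, |φ x| ≤ c) →
      (∀ x y, φ x + φ y ≤ φ (x ⊔ y) + φ (x ⊓ y)) →
      ∫ ω, φ (fun m => U₀ m ω ^ (1 - p m) * U₁ m ω ^ bval (I ω m)) ∂P
        ≤ ∫ ω, φ (fun m =>
            U₀' m ω ^ (1 - p m) * U₁' m ω ^ (if 1 - p m < V ω then (1 : ℝ) else 0)) ∂P' := by
  intro φ hφ hbd hsm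
  obtain ⟨c, hc⟩ := hbd
  set μ : Measure ℝ := volume.restrict (Icc (0:ℝ) 1) with hμdef
  haveI hμprob : IsProbabilityMeasure μ := GfgmAux.mu01_prob
  -- the GFGM map
  set g : (Fin d → Bool) → ((Fin d ⊕ Fin d) → ℝ) → (Fin d → ℝ) :=
    fun b u m => u (Sum.inl m) ^ (1 - p m) * u (Sum.inr m) ^ bval (b m) with hgdef
  have hgmeas : Measurable (fun x : (Fin d → Bool) × ((Fin d ⊕ Fin d) → ℝ) => g x.1 x.2) := by
    apply measurable_pi_lambda
    intro m
    exact (((measurable_pi_apply (Sum.inl m)).comp measurable_snd).pow measurable_const).mul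
      (((measurable_pi_apply (Sum.inr m)).comp measurable_snd).pow
        ((Measurable.of_discrete (f := bval)).comp ((measurable_pi_apply m).comp measurable_fst)))
  set π : Measure ((Fin d ⊕ Fin d) → ℝ) := Measure.pi (fun _ => μ) with hπdef
  haveI : IsProbabilityMeasure π := by rw [hπdef]; infer_instance
  set Ψ : (Fin d → Bool) → ℝ := fun b => ∫ u, φ (g b u) ∂π with hΨdef
  -- integrability of the basic integrand
  have hib : ∀ b, Integrable (fun u => φ (g b u)) π := by
    intro b
    refine ⟨(hφ.comp (hgmeas.comp (measurable_const.prodMk measurable_id))).aestronglyMeasurable, ?_⟩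
    exact HasFiniteIntegral.of_bounded (C := c) (ae_of_all _ fun u => by
      simpa [Real.norm_eq_abs] using hc _)
  -- a.e. all coordinates in [0,1]
  have hanull : ∀ᵐ u ∂π, ∀ j, u j ∈ Icc (0:ℝ) 1 := by
    rw [ae_all_iff]
    intro j
    rw [ae_iff]
    have hset : {u : (Fin d ⊕ Fin d) → ℝ | ¬ u j ∈ Icc (0:ℝ) 1}
        = Set.pi univ (Function.update (fun _ => (univ : Set ℝ)) j (Icc (0:ℝ) 1)ᶜ) := by
      ext u
      simp only [mem_setOf_eq, Set.mem_pi, mem_univ, forall_true_left]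
      constructor
      · intro h i
        by_cases hij : i = j
        · subst hij; simpa [Function.update_self] using h
        · simp [Function.update_of_ne hij]
      · intro h
        have := h j
        simpa [Function.update_self] using this
    rw [hset, hπdef, Measure.pi_pi]
    refine Finset.prod_eq_zero (Finset.mem_univ j) ?_
    rw [Function.update_self, hμdef, Measure.restrict_apply (measurableSet_Icc.compl)]
    simp
  -- supermodularity of Ψ
  have hΨsm : ∀ x y, Ψ x + Ψ y ≤ Ψ (x ⊔ y) + Ψ (x ⊓ y) := by
    intro x y
    rw [hΨdef]
    simp only
    rw [← integral_add (hib x) (hib y), ← integral_add (hib (x ⊔ y)) (hib (x ⊓ y))]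
    refine integral_mono_ae ((hib x).add (hib y)) ((hib (x ⊔ y)).add (hib (x ⊓ y))) ?_
    filter_upwards [hanull] with u hu
    have hkey : (g x u ⊔ g y u = g (x ⊓ y) u) ∧ (g x u ⊓ g y u = g (x ⊔ y) u) := by
      constructor <;> funext m <;>
      · have hA : (0:ℝ) ≤ u (Sum.inl m) ^ (1 - p m) :=
          Real.rpow_nonneg (hu (Sum.inl m)).1 _
        have ht1 : u (Sum.inr m) ≤ 1 := (hu (Sum.inr m)).2
        have := bool_pow hA ht1 (x m) (y m)
        simp only [Pi.sup_apply, Pi.inf_apply, hgdef]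
        first
          | exact this.1
          | exact this.2
    have h2 := hsm (g x u) (g y u)
    rw [hkey.1, hkey.2] at h2
    linarith
  -- LHS as an integral of Ψ against the law of I
  set u : Ω → (Fin d ⊕ Fin d) → ℝ := fun ω j => Sum.elim U₀ U₁ j ω with hudef
  have hjm : ∀ j : Fin d ⊕ Fin d, Measurable (Sum.elim U₀ U₁ j) := by
    intro j; cases j with
    | inl m => exact hU₀ m
    | inr m => exact hU₁ m
  have humeas : Measurable u := measurable_pi_lambda _ hjm
  have hulaw : P.map u = π := by
    rw [hπdef]
    refine map_pi_of_iIndep P _ hjm hiid _ ?_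
    intro j; cases j with
    | inl m => exact hU₀law m
    | inr m => exact hU₁law m
  haveI : IsProbabilityMeasure (P.map I) := Measure.isProbabilityMeasure_map hI.aemeasurable
  have hpair : P.map (fun ω => (I ω, u ω)) = (P.map I).prod π := by
    rw [(indepFun_iff_map_prod_eq_prod_map_map hI.aemeasurable humeas.aemeasurable).mp hIU,
      hulaw]
  have hfint : Integrable (fun x : (Fin d → Bool) × ((Fin d ⊕ Fin d) → ℝ) => φ (g x.1 x.2))
      ((P.map I).prod π) := by
    refine ⟨(hφ.comp hgmeas).aestronglyMeasurable, ?_⟩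
    exact HasFiniteIntegral.of_bounded (C := c) (ae_of_all _ fun x => by
      simpa [Real.norm_eq_abs] using hc _)
  have hLHS : ∫ ω, φ (fun m => U₀ m ω ^ (1 - p m) * U₁ m ω ^ bval (I ω m)) ∂P
      = ∫ b, Ψ b ∂(P.map I) := by
    have e1 : ∫ ω, φ (fun m => U₀ m ω ^ (1 - p m) * U₁ m ω ^ bval (I ω m)) ∂P
        = ∫ x, φ (g x.1 x.2) ∂(P.map (fun ω => (I ω, u ω))) :=
      (integral_map (hI.prodMk humeas).aemeasurable
        (hφ.comp hgmeas).aestronglyMeasurable).symm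
    rw [e1, hpair, integral_prod _ hfint]
  -- RHS as an integral of Ψ against the comonotone Bernoulli law
  set w : Ω' → (Unit ⊕ Fin d ⊕ Fin d) → ℝ :=
    fun ω j => Sum.elim (fun _ : Unit => V) (Sum.elim U₀' U₁') j ω with hwdef
  have hjm' : ∀ j : Unit ⊕ Fin d ⊕ Fin d,
      Measurable (Sum.elim (fun _ : Unit => V) (Sum.elim U₀' U₁') j) := by
    intro j
    rcases j with _ | j
    · exact hV
    · cases j with
      | inl m => exact hU₀' m
      | inr m => exact hU₁' m
  have hwmeas : Measurable w := measurable_pi_lambda _ hjm'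
  have hwlaw : P'.map w = Measure.pi (fun _ : Unit ⊕ Fin d ⊕ Fin d => μ) := by
    refine map_pi_of_iIndep P' _ hjm' hiid' _ ?_
    intro j
    rcases j with _ | j
    · exact hVlaw
    · cases j with
      | inl m => exact hU₀law' m
      | inr m => exact hU₁law' m
  set Ic : ℝ → Fin d → Bool := fun v m => decide (1 - p m < v) with hIcdef
  have hIcmeas : Measurable Ic := by
    rw [hIcdef]
    refine measurable_pi_lambda _ fun m => measurable_to_bool ?_
    have hpre : (fun v : ℝ => decide (1 - p m < v)) ⁻¹' {true} = Ioi (1 - p m) := by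
      ext v; simp
    rw [hpre]; exact measurableSet_Ioi
  set h : ((Unit ⊕ Fin d ⊕ Fin d) → ℝ) → ℝ :=
    fun x => φ (g (Ic (x (Sum.inl ()))) (fun j => x (Sum.inr j))) with hhdef
  have hhmeas : Measurable h := by
    rw [hhdef]
    have hm1 : Measurable fun x : (Unit ⊕ Fin d ⊕ Fin d) → ℝ =>
        ((Ic (x (Sum.inl ())), fun j => x (Sum.inr j)) :
          (Fin d → Bool) × ((Fin d ⊕ Fin d) → ℝ)) :=
      (hIcmeas.comp (measurable_pi_apply (Sum.inl ()))).prodMk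
        (measurable_pi_lambda (fun (x : (Unit ⊕ Fin d ⊕ Fin d) → ℝ) (j : Fin d ⊕ Fin d) => x (Sum.inr j)) fun j => measurable_pi_apply _)
    exact (hφ.comp hgmeas).comp hm1
  have e2 : ∫ ω, φ (fun m =>
        U₀' m ω ^ (1 - p m) * U₁' m ω ^ (if 1 - p m < V ω then (1:ℝ) else 0)) ∂P'
      = ∫ ω, h (w ω) ∂P' := by
    refine integral_congr_ae (ae_of_all _ fun ω => ?_)
    simp only [hhdef, hgdef, hwdef, hIcdef, Sum.elim_inl, Sum.elim_inr, bval_decide]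
    congr
  have e2' : ∫ ω, h (w ω) ∂P'
      = ∫ x, h x ∂(Measure.pi (fun _ : Unit ⊕ Fin d ⊕ Fin d => μ)) := by
    rw [← hwlaw, integral_map hwmeas.aemeasurable hhmeas.aestronglyMeasurable]
  have hmp := measurePreserving_sumPiEquivProdPi_symm (fun _ : Unit ⊕ Fin d ⊕ Fin d => μ)
  have e3 : ∫ x, h x ∂(Measure.pi (fun _ : Unit ⊕ Fin d ⊕ Fin d => μ))
      = ∫ z : (Unit → ℝ) × ((Fin d ⊕ Fin d) → ℝ),
          h ((MeasurableEquiv.sumPiEquivProdPi (fun _ => ℝ)).symm z)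
          ∂((Measure.pi fun _ : Unit => μ).prod π) := by
    rw [hπdef]
    exact (hmp.integral_comp
      (MeasurableEquiv.sumPiEquivProdPi _).symm.measurableEmbedding h).symm
  have hint2 : Integrable (fun z : (Unit → ℝ) × ((Fin d ⊕ Fin d) → ℝ) =>
      h ((MeasurableEquiv.sumPiEquivProdPi (fun _ => ℝ)).symm z))
      ((Measure.pi fun _ : Unit => μ).prod π) := by
    refine ⟨(hhmeas.comp
      (MeasurableEquiv.sumPiEquivProdPi _).symm.measurable).aestronglyMeasurable, ?_⟩
    refine HasFiniteIntegral.of_bounded (C := c) (ae_of_all _ fun z => ?_)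
    simp only [hhdef, Real.norm_eq_abs]
    exact hc _
  have e4 : ∫ z : (Unit → ℝ) × ((Fin d ⊕ Fin d) → ℝ),
        h ((MeasurableEquiv.sumPiEquivProdPi (fun _ => ℝ)).symm z)
        ∂((Measure.pi fun _ : Unit => μ).prod π)
      = ∫ a : Unit → ℝ, Ψ (Ic (a ())) ∂(Measure.pi fun _ : Unit => μ) := by
    rw [integral_prod _ hint2]
    refine integral_congr_ae (ae_of_all _ fun a => ?_)
    rw [hΨdef]
    refine integral_congr_ae (ae_of_all _ fun y => ?_)
    rfl
  have e5 : ∫ a : Unit → ℝ, Ψ (Ic (a ())) ∂(Measure.pi fun _ : Unit => μ)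
      = ∫ v, Ψ (Ic v) ∂μ := by
    have hmp2 := measurePreserving_funUnique (β := ℝ) μ Unit
    exact hmp2.integral_comp (MeasurableEquiv.funUnique Unit ℝ).measurableEmbedding
      (fun v => Ψ (Ic v))
  have hRHS : ∫ ω, φ (fun m =>
        U₀' m ω ^ (1 - p m) * U₁' m ω ^ (if 1 - p m < V ω then (1:ℝ) else 0)) ∂P'
      = ∫ v, Ψ (Ic v) ∂μ := by
    rw [e2, e2', e3, e4, e5]
  -- the sorting permutation
  set σ : Equiv.Perm (Fin d) := Tuple.sort (fun i => 1 - p i) with hσdef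
  have hσanti : ∀ j k : Fin d, j ≤ k → p (σ k) ≤ p (σ j) := by
    intro j k hjk
    have := Tuple.monotone_sort (fun i => 1 - p i) hjk
    simp only [Function.comp_apply] at this
    linarith
  have hmarg' : ∀ m, (P.map I) {b | b m = true} = ENNReal.ofReal (p m) := by
    intro m
    rw [Measure.map_apply hI (measurableSet_coord m)]
    exact hImarg m
  have hA := integral_le p (fun m => (hp m).1.le) σ (P.map I) hmarg' Ψ hΨsm
  have hB := integral_comono p hp σ hσanti Ψ
  rw [hLHS, hRHS]
  exact hA.trans (le_of_eq hB.symm)
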